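/- Let A be a normal idempotent n×n real matrix and let p, q ∈ ℝⁿ be its first and second columns. Then the tropical distance between the classes of p and q in ℝⁿ/ℝ(1,…,1) equals |a_{12} + a_{21}| = -(a_{12} + a_{21}). -/
import Mathlib


/-- Normalized difference: the zero-last-coordinate representative of `p - q`. -/
noncomputable def normDiff (n : ℕ) (p q : Fin (n+1) → ℝ) : Fin (n+1) → ℝ :=
  fun i => (p i - q i) - (p (Fin.last n) - q (Fin.last n))

/-- The tropical distance on `ℝⁿ/ℝ(1,…,1)`. -/
noncomputable def tdist (n : ℕ) (p q : Fin (n+1) → ℝ) : ℝ :=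
  Finset.univ.sup' Finset.univ_nonempty
    (fun ij : Fin (n+1) × Fin (n+1) =>
      max |normDiff n p q ij.1| |normDiff n p q ij.1 - normDiff n p q ij.2|)

/-- For a normal idempotent matrix `A`, the tropical distance between the classes
of its first two columns equals `|a_{12} + a_{21}| = -(a_{12} + a_{21})`. -/
theorem stmt7 (n : ℕ) (A : Matrix (Fin (n+2)) (Fin (n+2)) ℝ)
    (hdiag : ∀ i, A i i = 0) (hneg : ∀ i j, A i j ≤ 0)
    (hsub : ∀ i j k, A i k + A k j ≤ A i j) :
    tdist (n+1) (fun i => A i 0) (fun i => A i 1) = |A 0 1 + A 1 0| ∧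
    tdist (n+1) (fun i => A i 0) (fun i => A i 1) = -(A 0 1 + A 1 0) := by
  have h10 : A 0 1 + A 1 0 ≤ 0 := add_nonpos (hneg 0 1) (hneg 1 0)
  have key : tdist (n+1) (fun i => A i 0) (fun i => A i 1) = -(A 0 1 + A 1 0) := by
    unfold tdist normDiff
    apply le_antisymm
    · apply Finset.sup'_le
      intro ij _
      simp only
      apply max_le
      · rw [abs_le]
        have h1 := hsub ij.1 1 0
        have h2 := hsub (Fin.last (n+1)) 0 1
        have h3 := hsub ij.1 0 1
        have h4 := hsub (Fin.last (n+1)) 1 0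
        constructor <;> linarith
      · rw [abs_le]
        have h1 := hsub ij.1 1 0
        have h2 := hsub ij.2 0 1
        have h3 := hsub ij.1 0 1
        have h4 := hsub ij.2 1 0
        constructor <;> linarith
    · have hmem : ((0 : Fin (n+2)), (1 : Fin (n+2))) ∈ (Finset.univ : Finset (Fin (n+2) × Fin (n+2))) :=
        Finset.mem_univ _
      refine le_trans ?_ (Finset.le_sup' _ hmem)
      simp only
      refine le_trans ?_ (le_max_right _ _)
      have h00 := hdiag 0
      have h11 := hdiag 1
      have : ((A 0 0 - A 0 1) - (A (Fin.last (n+1)) 0 - A (Fin.last (n+1)) 1))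
          - ((A 1 0 - A 1 1) - (A (Fin.last (n+1)) 0 - A (Fin.last (n+1)) 1))
          = -(A 0 1 + A 1 0) := by linarith
      rw [this, abs_of_nonneg (by linarith)]
  exact ⟨key.trans (abs_of_nonpos h10).symm, key⟩
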